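/- Weakening is height-preserving admissible in G3Ldm_n^m: if the labelled sequent R, Γ has a G3Ldm_n^m-derivation of height h, then for any multiset of relational atoms R' and any multiset of labelled formulas Γ', the sequent R, R', Γ', Γ has a G3Ldm_n^m-derivation of height at most h. -/
import Mathlib


namespace Stit

/-- Formulas of the language `L^m` (negation normal form), with agents `Fin m`
and propositional variables indexed by `ℕ`. -/
inductive Fml (m : ℕ) : Type
  | pos : ℕ → Fml m                  -- p
  | neg : ℕ → Fml m                  -- p̄
  | and : Fml m → Fml m → Fml m      -- φ ∧ ψ
  | or  : Fml m → Fml m → Fml m      -- φ ∨ ψ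
  | box : Fml m → Fml m              -- □φ
  | dia : Fml m → Fml m              -- ◇φ
  | ag  : Fin m → Fml m → Fml m      -- [i]φ
  | dag : Fin m → Fml m → Fml m      -- ⟨i⟩φ

namespace Fml

/-- Negation `φ̄`: replace every connective/modality by its dual and swap `p` with `p̄`. -/
def negF {m : ℕ} : Fml m → Fml m
  | pos p => neg p
  | neg p => pos p
  | and φ ψ => or φ.negF ψ.negF
  | or φ ψ => and φ.negF ψ.negF
  | box φ => dia φ.negF
  | dia φ => box φ.negF
  | ag i φ => dag i φ.negF
  | dag i φ => ag i φ.negF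

/-- `φ → ψ` abbreviates `φ̄ ∨ ψ`. -/
def impF {m : ℕ} (φ ψ : Fml m) : Fml m := or φ.negF ψ

end Fml

/-- `f 0 ∧ f 1 ∧ ⋯ ∧ f k` (left-associated). -/
def conjUpTo {m : ℕ} (f : ℕ → Fml m) : ℕ → Fml m
  | 0 => f 0
  | k+1 => Fml.and (conjUpTo f k) (f (k+1))

/-- `f 0 ∨ f 1 ∨ ⋯ ∨ f k` (left-associated). -/
def disjUpTo {m : ℕ} (f : ℕ → Fml m) : ℕ → Fml m
  | 0 => f 0
  | k+1 => Fml.or (disjUpTo f k) (f (k+1))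

/-- `(f 0)̄ ∧ ((f 1)̄ ∧ ⋯ ((f (j-1))̄ ∧ base))`. -/
def prefNegConj {m : ℕ} (f : ℕ → Fml m) : ℕ → Fml m → Fml m
  | 0, base => base
  | j+1, base => prefNegConj f j (Fml.and (f j).negF base)

/-- The antecedent `◇[i]φ_0 ∧ ◇(φ̄_0 ∧ [i]φ_1) ∧ ⋯ ∧ ◇(φ̄_0 ∧ ⋯ ∧ φ̄_{n'-1} ∧ [i]φ_{n'})`
of the (n'+1)-choice axiom. -/
def apcAnte {m : ℕ} (i : Fin m) (f : ℕ → Fml m) (n' : ℕ) : Fml m :=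
  conjUpTo (fun j => Fml.dia (prefNegConj f j (Fml.ag i (f j)))) n'

/-- The n-choice axiom `APC_n^i` for `n = n' + 1` choices `φ_0, …, φ_{n'}`. -/
def apcAx {m : ℕ} (i : Fin m) (f : ℕ → Fml m) (n' : ℕ) : Fml m :=
  (apcAnte i f n').impF (disjUpTo f n')

def diaAgIdx {m : ℕ} (f : Fin m → Fml m) (j : ℕ) : Fml m :=
  if h : j < m then Fml.dia (Fml.ag ⟨j, h⟩ (f ⟨j, h⟩)) else Fml.pos 0

def agIdx {m : ℕ} (f : Fin m → Fml m) (j : ℕ) : Fml m :=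
  if h : j < m then Fml.ag ⟨j, h⟩ (f ⟨j, h⟩) else Fml.pos 0

/-- The independence-of-agents axiom `⋀_{i∈Ag} ◇[i]φ_i → ◇(⋀_{i∈Ag} [i]φ_i)`
(for `m ≥ 1` agents). -/
def ioaAx {m : ℕ} (f : Fin m → Fml m) : Fml m :=
  (conjUpTo (diaAgIdx f) (m-1)).impF (Fml.dia (conjUpTo (agIdx f) (m-1)))

/-- An `Ldm_n^m`-model on the carrier `W`: each `rel i` is an equivalence relation (C1),
independence of agents (C2), the `n`-choice condition when `n > 0` (C3), plus a valuation. -/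
structure ModelOn (n m : ℕ) (W : Type) : Type where
  nonemp : Nonempty W
  rel : Fin m → W → W → Prop
  refl : ∀ i w, rel i w w
  symm : ∀ i w u, rel i w u → rel i u w
  trans : ∀ i w u v, rel i w u → rel i u v → rel i w v
  ioa : ∀ u : Fin m → W, ∃ v, ∀ i, rel i (u i) v
  apc : 0 < n → ∀ (i : Fin m) (w : Fin (n+1) → W),
      ∃ k j : Fin (n+1), k < j ∧ rel i (w k) (w j)
  val : ℕ → Set W

/-- Satisfaction `M, w ⊩ φ`. -/
def Sat {n m : ℕ} {W : Type} (M : ModelOn n m W) : W → Fml m → Prop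
  | w, .pos p => w ∈ M.val p
  | w, .neg p => w ∉ M.val p
  | w, .and φ ψ => Sat M w φ ∧ Sat M w ψ
  | w, .or φ ψ => Sat M w φ ∨ Sat M w ψ
  | _, .box φ => ∀ u, Sat M u φ
  | _, .dia φ => ∃ u, Sat M u φ
  | w, .ag i φ => ∀ u, M.rel i w u → Sat M u φ
  | w, .dag i φ => ∃ u, M.rel i w u ∧ Sat M u φ

/-- Validity: `⊩ φ`. -/
def Valid (n m : ℕ) (φ : Fml m) : Prop :=
  ∀ (W : Type) (M : ModelOn n m W) (w : W), Sat M w φ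

/-- Semantic consequence `Γ ⊩ φ`. -/
def SemConseq (n m : ℕ) (Γ : Set (Fml m)) (φ : Fml m) : Prop :=
  ∀ (W : Type) (M : ModelOn n m W) (w : W), (∀ ψ ∈ Γ, Sat M w ψ) → Sat M w φ

/-- The Hilbert calculus `Ldm_n^m`: classical propositional logic, S5 for `□` and each
`[i]`, the bridge axiom, IOA, the n-choice axioms (for `n > 0`), with modus ponens and
necessitation (applied to theorems). `Hderiv n m Γ φ` is `Γ ⊢_{Ldm_n^m} φ`. -/
inductive Hderiv (n m : ℕ) : Set (Fml m) → Fml m → Prop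
  | prem {Γ} {φ} (h : φ ∈ Γ) : Hderiv n m Γ φ
  | ax1 {Γ} (φ ψ : Fml m) : Hderiv n m Γ (φ.impF (ψ.impF φ))
  | ax2 {Γ} (φ ψ χ : Fml m) :
      Hderiv n m Γ ((φ.impF (ψ.impF χ)).impF ((φ.impF ψ).impF (φ.impF χ)))
  | ax3 {Γ} (φ ψ : Fml m) :
      Hderiv n m Γ ((ψ.negF.impF φ.negF).impF (φ.impF ψ))
  | boxK {Γ} (φ ψ : Fml m) :
      Hderiv n m Γ ((Fml.box (φ.impF ψ)).impF ((Fml.box φ).impF (Fml.box ψ)))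
  | boxT {Γ} (φ : Fml m) : Hderiv n m Γ ((Fml.box φ).impF φ)
  | box5 {Γ} (φ : Fml m) : Hderiv n m Γ ((Fml.dia φ).impF (Fml.box (Fml.dia φ)))
  | boxDual {Γ} (φ : Fml m) : Hderiv n m Γ (Fml.or (Fml.box φ) (Fml.dia φ.negF))
  | agK {Γ} (i : Fin m) (φ ψ : Fml m) :
      Hderiv n m Γ ((Fml.ag i (φ.impF ψ)).impF ((Fml.ag i φ).impF (Fml.ag i ψ)))
  | agT {Γ} (i : Fin m) (φ : Fml m) : Hderiv n m Γ ((Fml.ag i φ).impF φ)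
  | ag5 {Γ} (i : Fin m) (φ : Fml m) :
      Hderiv n m Γ ((Fml.dag i φ).impF (Fml.ag i (Fml.dag i φ)))
  | agDual {Γ} (i : Fin m) (φ : Fml m) :
      Hderiv n m Γ (Fml.or (Fml.ag i φ) (Fml.dag i φ.negF))
  | bridge {Γ} (i : Fin m) (φ : Fml m) :
      Hderiv n m Γ ((Fml.box φ).impF (Fml.ag i φ))
  | ioa {Γ} (f : Fin m → Fml m) : Hderiv n m Γ (ioaAx f)
  | apc {Γ} (hn : 0 < n) (i : Fin m) (f : ℕ → Fml m) :
      Hderiv n m Γ (apcAx i f (n-1))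
  | mp {Γ} {φ ψ} : Hderiv n m Γ (φ.impF ψ) → Hderiv n m Γ φ → Hderiv n m Γ ψ
  | nec {Γ} {φ} : Hderiv n m ∅ φ → Hderiv n m Γ (Fml.box φ)

/-- A relational atom `R_i x y`. -/
abbrev RAtom (m : ℕ) : Type := Fin m × ℕ × ℕ
/-- The relational part of a labelled sequent: a multiset of relational atoms. -/
abbrev RAtoms (m : ℕ) : Type := Multiset (RAtom m)
/-- A labelled formula `x : φ`. -/
abbrev LFml (m : ℕ) : Type := ℕ × Fml m
/-- The formula part of a labelled sequent: a multiset of labelled formulas. -/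
abbrev LFmls (m : ℕ) : Type := Multiset (LFml m)

/-- The label `v` does not occur in the labelled sequent `R, Γ` (eigenvariable condition). -/
def freshIn {m : ℕ} (v : ℕ) (R : RAtoms m) (Γ : LFmls m) : Prop :=
  (∀ a ∈ R, a.2.1 ≠ v ∧ a.2.2 ≠ v) ∧ ∀ e ∈ Γ, e.1 ≠ v

/-- `Reach R i w u`: `u` is `i`-reachable from `w`, i.e. there is a (possibly empty)
path of `R_i`-atoms of `R` (traversed in either direction) connecting `w` to `u`. -/
inductive Reach {m : ℕ} (R : RAtoms m) (i : Fin m) : ℕ → ℕ → Prop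
  | refl (w : ℕ) : Reach R i w w
  | fwd {w u v : ℕ} : Reach R i w u → ((i, u, v) : RAtom m) ∈ R → Reach R i w v
  | bwd {w u v : ℕ} : Reach R i w u → ((i, v, u) : RAtom m) ∈ R → Reach R i w v

/-- The relational atoms `R_1 u_1 v, …, R_m u_m v` used by the rule (IOA). -/
def ioaAtoms {m : ℕ} (u : Fin m → ℕ) (v : ℕ) : RAtoms m :=
  Multiset.ofList ((List.finRange m).map fun i => ((i, u i, v) : RAtom m))

/-- Which optional rules are present in a labelled calculus, and whether the
`[i]`-rule keeps its principal formula in the premise. -/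
structure Flags : Type where
  refl : Bool    -- (refl_i)
  eucl : Bool    -- (eucl_i)
  diaAg : Bool   -- (⟨i⟩)
  pr : Bool      -- (Pr_i)
  ioa : Bool     -- (IOA)
  agKeep : Bool  -- premise of ([i]) keeps w:[i]φ

/-- `SeqH fl n m h R Γ`: the labelled sequent `R, Γ` has a derivation of height at most
`h` in the labelled calculus determined by `fl` (with parameters `n`, `m`). -/
inductive SeqH (fl : Flags) (n m : ℕ) : ℕ → RAtoms m → LFmls m → Prop
  | id {h : ℕ} {R : RAtoms m} {Γ : LFmls m} (w p : ℕ) :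
      SeqH fl n m h R ((w, Fml.pos p) ::ₘ (w, Fml.neg p) ::ₘ Γ)
  | andR {h R Γ} {w : ℕ} {φ ψ : Fml m} :
      SeqH fl n m h R ((w, Fml.and φ ψ) ::ₘ (w, φ) ::ₘ Γ) →
      SeqH fl n m h R ((w, Fml.and φ ψ) ::ₘ (w, ψ) ::ₘ Γ) →
      SeqH fl n m (h+1) R ((w, Fml.and φ ψ) ::ₘ Γ)
  | orR {h R Γ} {w : ℕ} {φ ψ : Fml m} :
      SeqH fl n m h R ((w, Fml.or φ ψ) ::ₘ (w, φ) ::ₘ (w, ψ) ::ₘ Γ) →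
      SeqH fl n m (h+1) R ((w, Fml.or φ ψ) ::ₘ Γ)
  | boxR {h R Γ} {w v : ℕ} {φ : Fml m}
      (hv : freshIn v R ((w, Fml.box φ) ::ₘ Γ)) :
      SeqH fl n m h R ((w, Fml.box φ) ::ₘ (v, φ) ::ₘ Γ) →
      SeqH fl n m (h+1) R ((w, Fml.box φ) ::ₘ Γ)
  | diaR {h R Γ} {w u : ℕ} {φ : Fml m} :
      SeqH fl n m h R ((w, Fml.dia φ) ::ₘ (u, φ) ::ₘ Γ) →
      SeqH fl n m (h+1) R ((w, Fml.dia φ) ::ₘ Γ)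
  | agR {h R Γ} {w v : ℕ} {i : Fin m} {φ : Fml m} (hfl : fl.agKeep = false)
      (hv : freshIn v R ((w, Fml.ag i φ) ::ₘ Γ)) :
      SeqH fl n m h (((i, w, v) : RAtom m) ::ₘ R) ((v, φ) ::ₘ Γ) →
      SeqH fl n m (h+1) R ((w, Fml.ag i φ) ::ₘ Γ)
  | agRKeep {h R Γ} {w v : ℕ} {i : Fin m} {φ : Fml m} (hfl : fl.agKeep = true)
      (hv : freshIn v R ((w, Fml.ag i φ) ::ₘ Γ)) :
      SeqH fl n m h (((i, w, v) : RAtom m) ::ₘ R) ((w, Fml.ag i φ) ::ₘ (v, φ) ::ₘ Γ) →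
      SeqH fl n m (h+1) R ((w, Fml.ag i φ) ::ₘ Γ)
  | dagR {h R Γ} {w u : ℕ} {i : Fin m} {φ : Fml m} (hfl : fl.diaAg = true) :
      SeqH fl n m h (((i, w, u) : RAtom m) ::ₘ R) ((w, Fml.dag i φ) ::ₘ (u, φ) ::ₘ Γ) →
      SeqH fl n m (h+1) (((i, w, u) : RAtom m) ::ₘ R) ((w, Fml.dag i φ) ::ₘ Γ)
  | reflR {h R Γ} {i : Fin m} {w : ℕ} (hfl : fl.refl = true) :
      SeqH fl n m h (((i, w, w) : RAtom m) ::ₘ R) Γ →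
      SeqH fl n m (h+1) R Γ
  | euclR {h R Γ} {i : Fin m} {w u v : ℕ} (hfl : fl.eucl = true) :
      SeqH fl n m h (((i, w, u) : RAtom m) ::ₘ ((i, w, v) : RAtom m) ::ₘ
        ((i, u, v) : RAtom m) ::ₘ R) Γ →
      SeqH fl n m (h+1) (((i, w, u) : RAtom m) ::ₘ ((i, w, v) : RAtom m) ::ₘ R) Γ
  | ioaR {h R Γ} (hfl : fl.ioa = true) (u : Fin m → ℕ) (v : ℕ) (hv : freshIn v R Γ) :
      SeqH fl n m h (ioaAtoms u v + R) Γ →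
      SeqH fl n m (h+1) R Γ
  | apcR {h R Γ} (hn : 0 < n) (i : Fin m) (w : Fin (n+1) → ℕ) :
      (∀ k j : Fin (n+1), k < j → SeqH fl n m h (((i, w k, w j) : RAtom m) ::ₘ R) Γ) →
      SeqH fl n m (h+1) R Γ
  | prR {h R Γ} {w u : ℕ} {i : Fin m} {φ : Fml m} (hfl : fl.pr = true)
      (hreach : Reach R i w u) :
      SeqH fl n m h R ((w, Fml.dag i φ) ::ₘ (u, φ) ::ₘ Γ) →
      SeqH fl n m (h+1) R ((w, Fml.dag i φ) ::ₘ Γ)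

/-- Derivability (of some height) in the labelled calculus determined by `fl`. -/
def Seq (fl : Flags) (n m : ℕ) (R : RAtoms m) (Γ : LFmls m) : Prop :=
  ∃ h, SeqH fl n m h R Γ

/-- The calculus `G3Ldm_n^m`. -/
def G3flags : Flags := ⟨true, true, true, false, true, false⟩
/-- The calculus `G3Ldm_n^m + PR`. -/
def G3PRflags : Flags := ⟨true, true, true, true, true, false⟩
/-- `G3Ldm_n^m + PR` without the rules `(refl_i)`. -/
def G3PRnoReflFlags : Flags := ⟨false, true, true, true, true, false⟩
/-- `G3Ldm_n^m + PR` without the rules `(eucl_i)`. -/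
def G3PRnoEuclFlags : Flags := ⟨true, false, true, true, true, false⟩
/-- The refined calculus `Ldm_n^m L`. -/
def LdmLflags : Flags := ⟨false, false, false, true, true, true⟩
/-- The refined single-agent calculus `Ldm_n^1 L` (no (IOA)). -/
def LdmL1flags : Flags := ⟨false, false, false, true, false, true⟩

/-- Substitution of the label `y` for the label `x`. -/
def substLab (x y v : ℕ) : ℕ := if v = x then y else v

def substR {m : ℕ} (x y : ℕ) (R : RAtoms m) : RAtoms m :=
  R.map fun a => (a.1, substLab x y a.2.1, substLab x y a.2.2)

def substF {m : ℕ} (x y : ℕ) (Γ : LFmls m) : LFmls m :=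
  Γ.map fun e => (substLab x y e.1, e.2)

/-- Height-preserving invertibility of every inference rule of the calculus given by `fl`. -/
def InvertAll (fl : Flags) (n m : ℕ) : Prop :=
  (∀ h R Γ (w : ℕ) (φ ψ : Fml m), SeqH fl n m h R ((w, Fml.and φ ψ) ::ₘ Γ) →
     SeqH fl n m h R ((w, Fml.and φ ψ) ::ₘ (w, φ) ::ₘ Γ) ∧
     SeqH fl n m h R ((w, Fml.and φ ψ) ::ₘ (w, ψ) ::ₘ Γ)) ∧
  (∀ h R Γ (w : ℕ) (φ ψ : Fml m), SeqH fl n m h R ((w, Fml.or φ ψ) ::ₘ Γ) →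
     SeqH fl n m h R ((w, Fml.or φ ψ) ::ₘ (w, φ) ::ₘ (w, ψ) ::ₘ Γ)) ∧
  (∀ h R Γ (w v : ℕ) (φ : Fml m), freshIn v R ((w, Fml.box φ) ::ₘ Γ) →
     SeqH fl n m h R ((w, Fml.box φ) ::ₘ Γ) →
     SeqH fl n m h R ((w, Fml.box φ) ::ₘ (v, φ) ::ₘ Γ)) ∧
  (∀ h R Γ (w u : ℕ) (φ : Fml m), SeqH fl n m h R ((w, Fml.dia φ) ::ₘ Γ) →
     SeqH fl n m h R ((w, Fml.dia φ) ::ₘ (u, φ) ::ₘ Γ)) ∧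
  (fl.agKeep = false → ∀ h R Γ (w v : ℕ) (i : Fin m) (φ : Fml m),
     freshIn v R ((w, Fml.ag i φ) ::ₘ Γ) →
     SeqH fl n m h R ((w, Fml.ag i φ) ::ₘ Γ) →
     SeqH fl n m h (((i, w, v) : RAtom m) ::ₘ R) ((v, φ) ::ₘ Γ)) ∧
  (fl.agKeep = true → ∀ h R Γ (w v : ℕ) (i : Fin m) (φ : Fml m),
     freshIn v R ((w, Fml.ag i φ) ::ₘ Γ) →
     SeqH fl n m h R ((w, Fml.ag i φ) ::ₘ Γ) →
     SeqH fl n m h (((i, w, v) : RAtom m) ::ₘ R) ((w, Fml.ag i φ) ::ₘ (v, φ) ::ₘ Γ)) ∧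
  (fl.diaAg = true → ∀ h R Γ (w u : ℕ) (i : Fin m) (φ : Fml m),
     SeqH fl n m h (((i, w, u) : RAtom m) ::ₘ R) ((w, Fml.dag i φ) ::ₘ Γ) →
     SeqH fl n m h (((i, w, u) : RAtom m) ::ₘ R) ((w, Fml.dag i φ) ::ₘ (u, φ) ::ₘ Γ)) ∧
  (fl.refl = true → ∀ h R Γ (i : Fin m) (w : ℕ), SeqH fl n m h R Γ →
     SeqH fl n m h (((i, w, w) : RAtom m) ::ₘ R) Γ) ∧
  (fl.eucl = true → ∀ h R Γ (i : Fin m) (w u v : ℕ),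
     SeqH fl n m h (((i, w, u) : RAtom m) ::ₘ ((i, w, v) : RAtom m) ::ₘ R) Γ →
     SeqH fl n m h (((i, w, u) : RAtom m) ::ₘ ((i, w, v) : RAtom m) ::ₘ
       ((i, u, v) : RAtom m) ::ₘ R) Γ) ∧
  (fl.ioa = true → ∀ h R Γ (u : Fin m → ℕ) (v : ℕ), freshIn v R Γ →
     SeqH fl n m h R Γ → SeqH fl n m h (ioaAtoms u v + R) Γ) ∧
  (0 < n → ∀ h R Γ (i : Fin m) (w : Fin (n+1) → ℕ) (k j : Fin (n+1)), k < j →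
     SeqH fl n m h R Γ → SeqH fl n m h (((i, w k, w j) : RAtom m) ::ₘ R) Γ) ∧
  (fl.pr = true → ∀ h R Γ (w u : ℕ) (i : Fin m) (φ : Fml m), Reach R i w u →
     SeqH fl n m h R ((w, Fml.dag i φ) ::ₘ Γ) →
     SeqH fl n m h R ((w, Fml.dag i φ) ::ₘ (u, φ) ::ₘ Γ))

/-- A labelled sequent `R, Γ` is satisfied in `M` under the interpretation `I`. -/
def SeqSat {n m : ℕ} {W : Type} (M : ModelOn n m W) (I : ℕ → W)
    (R : RAtoms m) (Γ : LFmls m) : Prop :=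
  (∀ a ∈ R, M.rel a.1 (I a.2.1) (I a.2.2)) → ∃ e ∈ Γ, Sat M (I e.1) e.2

/-- A labelled sequent is valid: satisfied in every model under every interpretation. -/
def SeqValid (n m : ℕ) (R : RAtoms m) (Γ : LFmls m) : Prop :=
  ∀ (W : Type) (M : ModelOn n m W) (I : ℕ → W), SeqSat M I R Γ

/-! ### Auxiliary lemmas for weakening -/

section Aux

variable {m : ℕ}

lemma substLab_same (x y : ℕ) : substLab x y x = y := by simp [substLab]

lemma substLab_ne {x y v : ℕ} (h : v ≠ x) : substLab x y v = v := by simp [substLab, h]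

lemma substR_cons (x y : ℕ) (a : RAtom m) (R : RAtoms m) :
    substR x y (a ::ₘ R) =
      (a.1, substLab x y a.2.1, substLab x y a.2.2) ::ₘ substR x y R := by
  simp [substR]

lemma substF_cons (x y : ℕ) (e : LFml m) (Γ : LFmls m) :
    substF x y (e ::ₘ Γ) = (substLab x y e.1, e.2) ::ₘ substF x y Γ := by
  simp [substF]

lemma substR_add (x y : ℕ) (R S : RAtoms m) :
    substR x y (R + S) = substR x y R + substR x y S := by
  simp [substR]

lemma substR_eq_of_fresh {v y : ℕ} {R : RAtoms m}
    (h : ∀ a ∈ R, a.2.1 ≠ v ∧ a.2.2 ≠ v) : substR v y R = R := by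
  unfold substR
  rw [show R.map (fun a => (a.1, substLab v y a.2.1, substLab v y a.2.2)) = R.map id from
    Multiset.map_congr rfl (by
      intro a ha
      obtain ⟨h1, h2⟩ := h a ha
      simp [substLab_ne h1, substLab_ne h2]), Multiset.map_id]

lemma substF_eq_of_fresh {v y : ℕ} {Γ : LFmls m}
    (h : ∀ e ∈ Γ, e.1 ≠ v) : substF v y Γ = Γ := by
  unfold substF
  rw [show Γ.map (fun e => (substLab v y e.1, e.2)) = Γ.map id from
    Multiset.map_congr rfl (by
      intro e he
      simp [substLab_ne (h e he)]), Multiset.map_id]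

lemma substR_ioaAtoms (x y : ℕ) (u : Fin m → ℕ) (v : ℕ) :
    substR x y (ioaAtoms u v) =
      ioaAtoms (fun i => substLab x y (u i)) (substLab x y v) := by
  simp only [substR, ioaAtoms, Multiset.map_coe, List.map_map]
  rfl

/-- Labels occurring in a multiset of relational atoms. -/
def labsR (R : RAtoms m) : Multiset ℕ := R.map (·.2.1) + R.map (·.2.2)

/-- Labels occurring in a multiset of labelled formulas. -/
def labsF (Γ : LFmls m) : Multiset ℕ := Γ.map (·.1)

/-- A label not occurring in `s`. -/
def freshLab (s : Multiset ℕ) : ℕ := s.sup + 1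

lemma freshLab_ne {s : Multiset ℕ} {a : ℕ} (ha : a ∈ s) : a ≠ freshLab s :=
  Nat.ne_of_lt (Nat.lt_succ_of_le (Multiset.le_sup ha))

lemma freshIn_freshLab (R : RAtoms m) (Γ : LFmls m) (t : Multiset ℕ) :
    freshIn (freshLab (labsR R + labsF Γ + t)) R Γ := by
  constructor
  · intro a ha
    constructor
    · exact freshLab_ne (by
        simp only [Multiset.mem_add, labsR, Multiset.mem_map]
        exact Or.inl (Or.inl (Or.inl ⟨a, ha, rfl⟩)))
    · exact freshLab_ne (by
        simp only [Multiset.mem_add, labsR, Multiset.mem_map]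
        exact Or.inl (Or.inl (Or.inr ⟨a, ha, rfl⟩)))
  · intro e he
    exact freshLab_ne (by
      simp only [Multiset.mem_add, labsF, Multiset.mem_map]
      exact Or.inl (Or.inr ⟨e, he, rfl⟩))

/-- Height-preserving admissibility of label substitution in `G3Ldm_n^m`. -/
lemma g3_subst_hp (n m : ℕ) :
    ∀ (h : ℕ) (R : RAtoms m) (Γ : LFmls m), SeqH G3flags n m h R Γ →
      ∀ x y : ℕ, SeqH G3flags n m h (substR x y R) (substF x y Γ) := by
  intro h
  induction h with
  | zero =>
    intro R Γ hd x y
    cases hd with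
    | id w p =>
      rw [substF_cons, substF_cons]
      exact SeqH.id _ _
  | succ k ih =>
    intro R Γ hd x y
    cases hd with
    | id w p =>
      rw [substF_cons, substF_cons]
      exact SeqH.id _ _
    | andR h1 h2 =>
      rename_i Γ w φ ψ
      have H1 := ih _ _ h1 x y
      have H2 := ih _ _ h2 x y
      rw [substF_cons, substF_cons] at H1 H2
      rw [substF_cons]
      exact SeqH.andR H1 H2
    | orR h1 =>
      rename_i Γ w φ ψ
      have H1 := ih _ _ h1 x y
      rw [substF_cons, substF_cons, substF_cons] at H1
      rw [substF_cons]
      exact SeqH.orR H1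
    | diaR h1 =>
      rename_i Γ w u φ
      have H1 := ih _ _ h1 x y
      rw [substF_cons, substF_cons] at H1
      rw [substF_cons]
      exact SeqH.diaR H1
    | boxR hv h1 =>
      rename_i Γ w v φ
      have hw : w ≠ v := hv.2 (w, Fml.box φ) (Multiset.mem_cons_self _ _)
      have hΓ : ∀ e ∈ Γ, e.1 ≠ v := fun e he => hv.2 e (Multiset.mem_cons_of_mem he)
      set v' := freshLab (labsR (substR x y R) +
        labsF (substF x y ((w, Fml.box φ) ::ₘ Γ)) + {x}) with hv'def
      have hfresh : freshIn v' (substR x y R) (substF x y ((w, Fml.box φ) ::ₘ Γ)) :=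
        freshIn_freshLab _ _ _
      have hvx : v' ≠ x :=
        Ne.symm (freshLab_ne (by simp))
      have H0 := ih _ _ h1 v v'
      rw [substR_eq_of_fresh hv.1, substF_cons, substF_cons, substF_eq_of_fresh hΓ] at H0
      simp only [substLab_ne hw, substLab_same] at H0
      have H1 := ih _ _ H0 x y
      rw [substF_cons, substF_cons] at H1
      rw [substLab_ne hvx] at H1
      rw [substF_cons]
      rw [substF_cons] at hfresh
      exact SeqH.boxR hfresh H1
    | agR hfl hv h1 =>
      rename_i Γ w v i φ
      have hw : w ≠ v := hv.2 (w, Fml.ag i φ) (Multiset.mem_cons_self _ _)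
      have hΓ : ∀ e ∈ Γ, e.1 ≠ v := fun e he => hv.2 e (Multiset.mem_cons_of_mem he)
      set v' := freshLab (labsR (substR x y R) +
        labsF (substF x y ((w, Fml.ag i φ) ::ₘ Γ)) + {x}) with hv'def
      have hfresh : freshIn v' (substR x y R) (substF x y ((w, Fml.ag i φ) ::ₘ Γ)) :=
        freshIn_freshLab _ _ _
      have hvx : v' ≠ x := Ne.symm (freshLab_ne (by simp))
      have H0 := ih _ _ h1 v v'
      rw [substR_cons, substR_eq_of_fresh hv.1, substF_cons, substF_eq_of_fresh hΓ] at H0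
      simp only [substLab_ne hw, substLab_same] at H0
      have H1 := ih _ _ H0 x y
      rw [substR_cons, substF_cons] at H1
      simp only [substLab_ne hvx] at H1
      rw [substF_cons]
      rw [substF_cons] at hfresh
      exact SeqH.agR hfl hfresh H1
    | agRKeep hfl hv h1 => simp [G3flags] at hfl
    | dagR hfl h1 =>
      rename_i Γ w u i φ
      have H1 := ih _ _ h1 x y
      rw [substR_cons, substF_cons, substF_cons] at H1
      rw [substR_cons, substF_cons]
      exact SeqH.dagR hfl H1
    | reflR hfl h1 =>
      rename_i i w
      have H1 := ih _ _ h1 x y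
      rw [substR_cons] at H1
      exact SeqH.reflR hfl H1
    | euclR hfl h1 =>
      rename_i i w u v
      have H1 := ih _ _ h1 x y
      rw [substR_cons, substR_cons, substR_cons] at H1
      rw [substR_cons, substR_cons]
      exact SeqH.euclR hfl H1
    | ioaR hfl u v hv h1 =>
      have hΓ : ∀ e ∈ Γ, e.1 ≠ v := hv.2
      set v' := freshLab (labsR (substR x y R) + labsF (substF x y Γ) + {x}) with hv'def
      have hfresh : freshIn v' (substR x y R) (substF x y Γ) := freshIn_freshLab _ _ _
      have hvx : v' ≠ x := Ne.symm (freshLab_ne (by simp))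
      have H0 := ih _ _ h1 v v'
      rw [substR_add, substR_eq_of_fresh hv.1, substF_eq_of_fresh hΓ,
        substR_ioaAtoms, substLab_same] at H0
      have H1 := ih _ _ H0 x y
      rw [substR_add, substR_ioaAtoms, substLab_ne hvx] at H1
      exact SeqH.ioaR hfl _ v' hfresh H1
    | apcR hn i w h1 =>
      refine SeqH.apcR hn i (fun t => substLab x y (w t)) (fun k' j hkj => ?_)
      have H1 := ih _ _ (h1 k' j hkj) x y
      rw [substR_cons] at H1
      exact H1
    | prR hfl hreach h1 => simp [G3flags] at hfl

end Aux

/-- Weakening is height-preserving admissible in `G3Ldm_n^m`. -/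
theorem g3_weakening_hp_admissible (n m : ℕ) (hm : 1 ≤ m)
    (h : ℕ) (R R' : RAtoms m) (Γ Γ' : LFmls m)
    (hd : SeqH G3flags n m h R Γ) :
    SeqH G3flags n m h (R' + R) (Γ' + Γ) := by
  clear hm
  induction h generalizing R Γ with
  | zero =>
    cases hd with
    | id w p =>
      rw [Multiset.add_cons, Multiset.add_cons]
      exact SeqH.id _ _
  | succ k ih =>
    cases hd with
    | id w p =>
      rw [Multiset.add_cons, Multiset.add_cons]
      exact SeqH.id _ _
    | andR h1 h2 =>
      have H1 := ih _ _ h1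
      have H2 := ih _ _ h2
      rw [Multiset.add_cons, Multiset.add_cons] at H1 H2
      rw [Multiset.add_cons]
      exact SeqH.andR H1 H2
    | orR h1 =>
      have H1 := ih _ _ h1
      rw [Multiset.add_cons, Multiset.add_cons, Multiset.add_cons] at H1
      rw [Multiset.add_cons]
      exact SeqH.orR H1
    | diaR h1 =>
      have H1 := ih _ _ h1
      rw [Multiset.add_cons, Multiset.add_cons] at H1
      rw [Multiset.add_cons]
      exact SeqH.diaR H1
    | boxR hv h1 =>
      rename_i Γ w v φ
      have hw : w ≠ v := hv.2 (w, Fml.box φ) (Multiset.mem_cons_self _ _)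
      have hΓ : ∀ e ∈ Γ, e.1 ≠ v := fun e he => hv.2 e (Multiset.mem_cons_of_mem he)
      set v' := freshLab (labsR (R' + R) +
        labsF ((w, Fml.box φ) ::ₘ (Γ' + Γ)) + 0) with hv'def
      have hfresh : freshIn v' (R' + R) ((w, Fml.box φ) ::ₘ (Γ' + Γ)) :=
        freshIn_freshLab _ _ _
      have H0 := g3_subst_hp n m _ _ _ h1 v v'
      rw [substR_eq_of_fresh hv.1, substF_cons, substF_cons, substF_eq_of_fresh hΓ] at H0
      simp only [substLab_ne hw, substLab_same] at H0
      have H1 := ih _ _ H0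
      rw [Multiset.add_cons, Multiset.add_cons] at H1
      rw [Multiset.add_cons]
      exact SeqH.boxR hfresh H1
    | agR hfl hv h1 =>
      rename_i Γ w v i φ
      have hw : w ≠ v := hv.2 (w, Fml.ag i φ) (Multiset.mem_cons_self _ _)
      have hΓ : ∀ e ∈ Γ, e.1 ≠ v := fun e he => hv.2 e (Multiset.mem_cons_of_mem he)
      set v' := freshLab (labsR (R' + R) +
        labsF ((w, Fml.ag i φ) ::ₘ (Γ' + Γ)) + 0) with hv'def
      have hfresh : freshIn v' (R' + R) ((w, Fml.ag i φ) ::ₘ (Γ' + Γ)) :=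
        freshIn_freshLab _ _ _
      have H0 := g3_subst_hp n m _ _ _ h1 v v'
      rw [substR_cons, substR_eq_of_fresh hv.1, substF_cons, substF_eq_of_fresh hΓ] at H0
      simp only [substLab_ne hw, substLab_same] at H0
      have H1 := ih _ _ H0
      rw [Multiset.add_cons, Multiset.add_cons] at H1
      rw [Multiset.add_cons]
      exact SeqH.agR hfl hfresh H1
    | agRKeep hfl hv h1 => simp [G3flags] at hfl
    | dagR hfl h1 =>
      have H1 := ih _ _ h1
      rw [Multiset.add_cons, Multiset.add_cons, Multiset.add_cons] at H1
      rw [Multiset.add_cons, Multiset.add_cons]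
      exact SeqH.dagR hfl H1
    | reflR hfl h1 =>
      have H1 := ih _ _ h1
      rw [Multiset.add_cons] at H1
      exact SeqH.reflR hfl H1
    | euclR hfl h1 =>
      have H1 := ih _ _ h1
      rw [Multiset.add_cons, Multiset.add_cons, Multiset.add_cons] at H1
      rw [Multiset.add_cons, Multiset.add_cons]
      exact SeqH.euclR hfl H1
    | ioaR hfl u v hv h1 =>
      set v' := freshLab (labsR (R' + R) + labsF (Γ' + Γ) + 0) with hv'def
      have hfresh : freshIn v' (R' + R) (Γ' + Γ) := freshIn_freshLab _ _ _
      have H0 := g3_subst_hp n m _ _ _ h1 v v'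
      rw [substR_add, substR_eq_of_fresh hv.1, substF_eq_of_fresh hv.2,
        substR_ioaAtoms, substLab_same] at H0
      have H1 := ih _ _ H0
      rw [← add_assoc, add_comm R' (ioaAtoms _ v'), add_assoc] at H1
      exact SeqH.ioaR hfl _ v' hfresh H1
    | apcR hn i w h1 =>
      refine SeqH.apcR hn i w (fun k' j hkj => ?_)
      have H1 := ih _ _ (h1 k' j hkj)
      rw [Multiset.add_cons] at H1
      exact H1
    | prR hfl hreach h1 => simp [G3flags] at hfl

end Stit
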